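/- arXiv:1909.04172 — 3 statements merged into one kernel-verified Lean document; each statement's English description precedes it below -/
import Mathlib

section
/- Let i be a node with a set P of at least (2β+1)f+1 regular in-neighbors of which at most βf are impersonated, and at most f adversarial in-neighbors. Then one can pick one common regular non-impersonated in-neighbor q and at least (β+1)f pairwise distinct regular non-impersonated in-neighbors p_1,…,p_r (all distinct from q), with r at least the number of adversarial-or-impersonated in-neighbors; hence there exist at least (β+1)f motifs around i, each containing an independent node. -/
/-- given at least (2β+1)f+1 regular in-neighbors of which at most
βf are impersonated and at most f adversarial in-neighbors, one can pick a
common good node q and at least (β+1)f further distinct good nodes, at least as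
many as the adversarial-or-impersonated in-neighbors; hence at least (β+1)f
motifs, each with an independent node. -/
theorem motif_existence (V : Type) [DecidableEq V]
    (R Imp Adv : Finset V) (f β : ℕ)
    (hR : (2 * β + 1) * f + 1 ≤ R.card)
    (hImpSub : Imp ⊆ R) (hImp : Imp.card ≤ β * f)
    (hAdv : Adv.card ≤ f) (hdisj : Disjoint R Adv) :
    ∃ q ∈ R \ Imp, ∃ P : Finset V,
      P ⊆ (R \ Imp) \ {q} ∧ (β + 1) * f ≤ P.card ∧ (Adv ∪ Imp).card ≤ P.card := by
  have e1 : (2 * β + 1) * f = β * f + ((β + 1) * f) := by ring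
  have e2 : (β + 1) * f = β * f + f := by ring
  have hcard : (β + 1) * f + 1 ≤ (R \ Imp).card := by
    rw [Finset.card_sdiff_of_subset hImpSub]
    omega
  have hne : (R \ Imp).Nonempty := Finset.card_pos.mp (by omega)
  obtain ⟨q, hq⟩ := hne
  refine ⟨q, hq, (R \ Imp) \ {q}, le_refl _, ?_, ?_⟩
  · have := Finset.card_sdiff_of_subset (Finset.singleton_subset_iff.mpr hq)
    rw [this, Finset.card_singleton]
    omega
  · have h1 : (Adv ∪ Imp).card ≤ Adv.card + Imp.card := Finset.card_union_le _ _
    have h2 := Finset.card_sdiff_of_subset (Finset.singleton_subset_iff.mpr hq)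
    rw [h2, Finset.card_singleton]
    omega
end

section
/- Termination of the SR-MEDAG construction under adversaries: let G be strongly (3(β+1)f+1)-robust w.r.t. S_j, let A be an f-local adversarial set, and for each regular node i let at most βf of its regular in-neighbors be silenced (never counted as having sent the correct message). If the set C of regular nodes that never flip their counter to 1 were nonempty, then C contains a node i with at least 3(β+1)f+1 in-neighbors outside C, of which at least 2(β+1)f+1 are regular, non-silenced nodes with counter 1 — contradicting i ∈ C. Hence C is empty: every regular node eventually flips its counter. -/
/-- termination of the SR-MEDAG construction under adversaries:
if `G` is strongly `(3(β+1)f+1)`-robust w.r.t. `S`, `A` is `f`-local, each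
regular node has at most `βf` silenced regular in-neighbors, regular source
nodes flip their counter, and a regular node flips whenever at least
`2(β+1)f+1` of its regular non-silenced in-neighbors have flipped, then every
regular node flips its counter. -/
theorem srmedag_termination (V : Type) [Fintype V] [DecidableEq V]
    (N : V → Finset V) (S A Imp : Finset V) (f β : ℕ)
    (flips : V → Prop) [DecidablePred flips]
    (hrob : ∀ C : Finset V, C ⊆ Finset.univ \ S → C.Nonempty →
      ∃ i ∈ C, 3 * (β + 1) * f + 1 ≤ (N i \ C).card)
    (hlocal : ∀ i : V, i ∉ A → (N i ∩ A).card ≤ f)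
    (hImp : ∀ i : V, i ∉ A → (N i ∩ Imp).card ≤ β * f)
    (hsrc : ∀ i ∈ S, i ∉ A → flips i)
    (hflip : ∀ i : V, i ∉ A →
      2 * (β + 1) * f + 1 ≤ (((N i \ (A ∪ Imp))).filter flips).card → flips i) :
    ∀ i : V, i ∉ A → flips i := by
  by_contra h
  push_neg at h
  set C : Finset V := Finset.univ.filter (fun i => i ∉ A ∧ ¬ flips i) with hC
  have hCmem : ∀ j, j ∈ C ↔ (j ∉ A ∧ ¬ flips j) := by
    intro j; simp [hC]
  have hCsub : C ⊆ Finset.univ \ S := by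
    intro j hj
    rw [hCmem] at hj
    simp only [Finset.mem_sdiff, Finset.mem_univ, true_and]
    intro hjS
    exact hj.2 (hsrc j hjS hj.1)
  have hCne : C.Nonempty := by
    obtain ⟨i, hiA, hif⟩ := h
    exact ⟨i, (hCmem i).2 ⟨hiA, hif⟩⟩
  obtain ⟨i, hiC, hcard⟩ := hrob C hCsub hCne
  rw [hCmem] at hiC
  obtain ⟨hiA, hif⟩ := hiC
  apply hif
  apply hflip i hiA
  -- key subset
  have hsub : (N i \ C) \ (A ∪ Imp) ⊆ (N i \ (A ∪ Imp)).filter flips := by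
    intro j hj
    simp only [Finset.mem_sdiff, Finset.mem_union, not_or, Finset.mem_filter] at hj ⊢
    obtain ⟨⟨hjN, hjC⟩, hjA, hjI⟩ := hj
    refine ⟨⟨hjN, hjA, hjI⟩, ?_⟩
    by_contra hfj
    exact hjC ((hCmem j).2 ⟨hjA, hfj⟩)
  have h1 : (N i \ C).card ≤ ((N i \ C) \ (A ∪ Imp)).card + ((N i \ C) ∩ (A ∪ Imp)).card := by
    rw [Finset.card_sdiff_add_card_inter]
  have h2 : ((N i \ C) ∩ (A ∪ Imp)).card ≤ (N i ∩ A).card + (N i ∩ Imp).card := by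
    calc ((N i \ C) ∩ (A ∪ Imp)).card ≤ ((N i ∩ A) ∪ (N i ∩ Imp)).card := by
          apply Finset.card_le_card
          intro j hj
          simp only [Finset.mem_inter, Finset.mem_sdiff, Finset.mem_union] at hj ⊢
          rcases hj.2 with h' | h'
          · exact Or.inl ⟨hj.1.1, h'⟩
          · exact Or.inr ⟨hj.1.1, h'⟩
      _ ≤ (N i ∩ A).card + (N i ∩ Imp).card := Finset.card_union_le _ _
  have h3 := hlocal i hiA
  have h4 := hImp i hiA
  have h5 : ((N i \ C) \ (A ∪ Imp)).card ≤ ((N i \ (A ∪ Imp)).filter flips).card :=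
    Finset.card_le_card hsub
  have e1 : 3*(β+1)*f = 3*f+3*(β*f) := by ring
  have e2 : 2*(β+1)*f = 2*f+2*(β*f) := by ring
  omega
end

section
/- Sandwich filtering soundness: let a node receive values v_1 ≤ v_2 ≤ … ≤ v_n (sorted) from n ≥ 2m+1 neighbors, of which at most m are adversarial. After removing the m largest and m smallest values, every remaining value v lies between the minimum and maximum of the regular (non-adversarial) neighbors' values: min over regular values ≤ v ≤ max over regular values. -/
/-- sandwich filtering soundness: given `n ≥ 2m+1` sorted values
of which at most `m` are adversarial, after removing the `m` smallest and `m`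
largest, every surviving value lies between the minimum and maximum of the
regular neighbors' values. -/
theorem sandwich_filtering_sound (n m : ℕ) (hn : 2 * m + 1 ≤ n)
    (v : Fin n → ℝ) (hsorted : Monotone v)
    (Adv : Finset (Fin n)) (hAdv : Adv.card ≤ m)
    (hR : (Finset.univ \ Adv).Nonempty) :
    ∀ i : Fin n, m ≤ (i : ℕ) → (i : ℕ) + m < n →
      (Finset.univ \ Adv).inf' hR v ≤ v i ∧ v i ≤ (Finset.univ \ Adv).sup' hR v := by
  intro i him hi
  constructor
  · -- find a regular j ≤ i
    have hcard : Adv.card < (Finset.Iic i).card := by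
      rw [Fin.card_Iic]; omega
    obtain ⟨j, hjI, hjA⟩ := Finset.not_subset.mp (fun h => absurd (Finset.card_le_card h) (not_le.mpr hcard))
    have hj := And.intro hjI hjA
    have hj1 : j ≤ i := Finset.mem_Iic.mp hj.1
    have hjm : j ∈ Finset.univ \ Adv := by
      simp [Finset.mem_sdiff, hj.2]
    exact le_trans (Finset.inf'_le v hjm) (hsorted hj1)
  · have hcard : Adv.card < (Finset.Ici i).card := by
      rw [Fin.card_Ici]; omega
    obtain ⟨j, hjI, hjA⟩ := Finset.not_subset.mp (fun h => absurd (Finset.card_le_card h) (not_le.mpr hcard))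
    have hj := And.intro hjI hjA
    have hj1 : i ≤ j := Finset.mem_Ici.mp hj.1
    have hjm : j ∈ Finset.univ \ Adv := by
      simp [Finset.mem_sdiff, hj.2]
    exact le_trans (hsorted hj1) (Finset.le_sup' v hjm)
end
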